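/- Let E, E' be ℝ-linear subspaces of ℝⁿ and D, D' discrete additive subgroups of ℝⁿ with E' ∩ span_ℝ(D') = {0}. Let f₁ : ℝⁿ → ℝⁿ be an ℝ-linear map with f₁(E) ⊆ E', and let f₂ : D → ℝⁿ be a homomorphism of additive groups with f₂(D) ⊆ D'. Then the set {f₁(x) + f₂(y) : x ∈ E, y ∈ D} is closed in ℝⁿ. -/

import Mathlib

/-- Theorem 1.8(iv) / Lemma 4.1(i): the image `{f₁(x) + f₂(y) : x ∈ E, y ∈ D}`
of a homomorphism of closed additive groups is a closed subset of `ℝⁿ`. -/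
theorem isClosed_image_hom_closed_additive_group (n : ℕ)
    (E E' : Submodule ℝ (Fin n → ℝ)) (D D' : AddSubgroup (Fin n → ℝ))
    (hD : DiscreteTopology D) (hD' : DiscreteTopology D')
    (hED' : E' ⊓ Submodule.span ℝ (D' : Set (Fin n → ℝ)) = ⊥)
    (f₁ : (Fin n → ℝ) →ₗ[ℝ] (Fin n → ℝ)) (hf₁ : ∀ x ∈ E, f₁ x ∈ E')
    (f₂ : D →+ (Fin n → ℝ)) (hf₂ : ∀ y : D, f₂ y ∈ D') :
    IsClosed {z : Fin n → ℝ | ∃ x ∈ E, ∃ y : D, z = f₁ x + f₂ y} := by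
  classical
  -- V = f₁(E), Γ = f₂(D)
  set V : Submodule ℝ (Fin n → ℝ) := E.map f₁ with hV
  set Γ : AddSubgroup (Fin n → ℝ) := f₂.range with hΓ
  have hVE' : V ≤ E' := by
    rintro _ ⟨x, hx, rfl⟩; exact hf₁ x hx
  have hΓD' : (Γ : Set (Fin n → ℝ)) ⊆ (D' : Set (Fin n → ℝ)) := by
    rintro _ ⟨y, rfl⟩; exact hf₂ y
  -- Γ is discrete and closed
  have hΓdisc : DiscreteTopology Γ := DiscreteTopology.of_subset hD' hΓD'
  have hΓclosed : IsClosed (Γ : Set (Fin n → ℝ)) := AddSubgroup.isClosed_of_discrete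
  -- S = span Γ, disjoint from V
  set S : Submodule ℝ (Fin n → ℝ) := Submodule.span ℝ (Γ : Set (Fin n → ℝ)) with hS
  have hSD' : S ≤ Submodule.span ℝ (D' : Set (Fin n → ℝ)) := Submodule.span_mono hΓD'
  have hVS : Disjoint V S := by
    rw [disjoint_iff]
    have : V ⊓ S ≤ E' ⊓ Submodule.span ℝ (D' : Set (Fin n → ℝ)) := inf_le_inf hVE' hSD'
    rw [hED'] at this; exact le_bot_iff.mp this
  -- extend S to a complement W of V
  obtain ⟨T, hT⟩ := Submodule.exists_isCompl (V ⊔ S)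
  set W : Submodule ℝ (Fin n → ℝ) := S ⊔ T with hW
  have hcompl : IsCompl V W := by
    constructor
    · exact hVS.disjoint_sup_right_of_disjoint_sup_left hT.disjoint
    · rw [codisjoint_iff, hW, ← sup_assoc]
      exact hT.codisjoint.eq_top
  -- projection onto W along V
  set π : (Fin n → ℝ) →ₗ[ℝ] (Fin n → ℝ) :=
    W.subtype.comp (W.projectionOnto V hcompl.symm) with hπ
  have hπcont : Continuous π := π.continuous_of_finiteDimensional
  have hπV : ∀ v ∈ V, π v = 0 := fun v hv => by
    simp [hπ, Submodule.projectionOnto_apply_of_mem_right hcompl.symm hv]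
  have hπW : ∀ w ∈ W, π w = w := fun w hw => by
    simp [hπ, Submodule.projectionOnto_apply_left hcompl.symm ⟨w, hw⟩]
  have hπker : ∀ z : Fin n → ℝ, z - π z ∈ V := fun z => by
    have := Submodule.projection_add_projection_eq_self hcompl.symm z
    have h2 : z - π z = (V.projectionOnto W hcompl z : Fin n → ℝ) := by
      simp only [hπ, LinearMap.comp_apply, Submodule.subtype_apply]
      exact eq_sub_iff_add_eq.mpr ((add_comm _ _).trans this) |>.symm
    rw [h2]; exact (V.projectionOnto W hcompl z).2
  -- the set equals π ⁻¹' Γ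
  have key : {z : Fin n → ℝ | ∃ x ∈ E, ∃ y : D, z = f₁ x + f₂ y}
      = π ⁻¹' (Γ : Set (Fin n → ℝ)) := by
    ext z
    constructor
    · rintro ⟨x, hx, y, rfl⟩
      have hg : f₂ y ∈ Γ := ⟨y, rfl⟩
      have hgW : f₂ y ∈ W := (le_sup_left : S ≤ W) (Submodule.subset_span hg)
      simp only [Set.mem_preimage, map_add, hπV _ ⟨x, hx, rfl⟩, hπW _ hgW, zero_add]
      exact hg
    · intro hz
      obtain ⟨y, hy⟩ := hz
      obtain ⟨x, hx, hxz⟩ := hπker z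
      exact ⟨x, hx, y, by rw [hxz, hy]; ring⟩
  rw [key]
  exact hΓclosed.preimage hπcont
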